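/- Let P be a periodic Borel automorphism of an uncountable standard Borel space (X, 𝓑) and let F₁, …, Fₙ be Borel subsets of X. Then there exist an aperiodic smooth Borel automorphism S of X and a Borel automorphism Q of X whose support is countable such that (S ∘ Q)(Fᵢ) = P(Fᵢ) for every i = 1, …, n. (Density of aperiodic smooth automorphisms in the quotient group Aut₀(X, 𝓑) = Aut(X, 𝓑)/Ctbl(X) with respect to the quotient weak topology p₀.) -/

import Mathlib

open MeasureTheory Set

/-- `T` is a Borel automorphism: both `T` and its inverse are measurable. -/
def IsBorelAuto {X : Type*} [MeasurableSpace X] (T : Equiv.Perm X) : Prop :=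
  Measurable T ∧ Measurable T.symm

/-- `T` is aperiodic: no point is periodic. -/
def IsAperiodic {X : Type*} (T : Equiv.Perm X) : Prop :=
  ∀ (x : X) (n : ℤ), n ≠ 0 → (T ^ n) x ≠ x

/-- `T` is periodic: every point is periodic. -/
def IsPeriodicAuto {X : Type*} (T : Equiv.Perm X) : Prop :=
  ∀ x : X, ∃ n : ℕ, 1 ≤ n ∧ (T ^ n) x = x

/-- `T` is smooth: some Borel set meets every `T`-orbit in exactly one point. -/
def IsSmooth {X : Type*} [MeasurableSpace X] (T : Equiv.Perm X) : Prop :=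
  ∃ A : Set X, MeasurableSet A ∧ ∀ x : X, ∃! a, a ∈ A ∧ ∃ n : ℤ, (T ^ n) x = a


section Helpers
variable {X : Type*} {κ : Type*}

private lemma countable_image_equiv_iff {α β : Type*} (e : α ≃ β) (s : Set α) :
    (⇑e '' s).Countable ↔ s.Countable :=
  ⟨fun h => by simpa [Equiv.symm_image_image] using h.image ⇑e.symm, fun h => h.image _⟩

private lemma not_countable_diff {s t : Set X} (hs : ¬ s.Countable) (ht : t.Countable) :
    ¬ (s \ t).Countable := fun h => hs ((h.union ht).mono (subset_diff_union s t))

private lemma glue_exists (u v : κ → Set X) (hu : ∀ x, ∃! j, x ∈ u j)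
    (hv : ∀ x, ∃! j, x ∈ v j) (e : ∀ j, u j ≃ v j) :
    ∃ T : Equiv.Perm X, ∀ j (x : X) (hx : x ∈ u j), T x = (e j ⟨x, hx⟩ : X) := by
  classical
  have huc : ∀ x, x ∈ u (hu x).choose := fun x => (hu x).choose_spec.1
  have hvc : ∀ y, y ∈ v (hv y).choose := fun y => (hv y).choose_spec.1
  set f : X → X := fun x => (e (hu x).choose ⟨x, huc x⟩ : X) with hfdef
  set g : X → X := fun y => ((e (hv y).choose).symm ⟨y, hvc y⟩ : X) with hgdef
  have hfj : ∀ j (x : X) (hx : x ∈ u j), f x = (e j ⟨x, hx⟩ : X) := by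
    intro j x hx
    have hj : (hu x).choose = j := ((hu x).choose_spec.2 j hx).symm
    subst hj; rfl
  have hgj : ∀ j (y : X) (hy : y ∈ v j), g y = ((e j).symm ⟨y, hy⟩ : X) := by
    intro j y hy
    have hj : (hv y).choose = j := ((hv y).choose_spec.2 j hy).symm
    subst hj; rfl
  have hgf : ∀ x, g (f x) = x := by
    intro x
    have hme : f x ∈ v (hu x).choose := by
      rw [hfj _ x (huc x)]; exact (e (hu x).choose ⟨x, huc x⟩).2
    rw [hgj _ (f x) hme]
    have h2 : (⟨f x, hme⟩ : v (hu x).choose) = e (hu x).choose ⟨x, huc x⟩ :=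
      Subtype.ext (hfj _ x (huc x))
    rw [h2, Equiv.symm_apply_apply]
  have hfg : ∀ y, f (g y) = y := by
    intro y
    have hme : g y ∈ u (hv y).choose := by
      rw [hgj _ y (hvc y)]; exact ((e (hv y).choose).symm ⟨y, hvc y⟩).2
    rw [hfj _ (g y) hme]
    have h2 : (⟨g y, hme⟩ : u (hv y).choose) = (e (hv y).choose).symm ⟨y, hvc y⟩ :=
      Subtype.ext (hgj _ y (hvc y))
    rw [h2, Equiv.apply_symm_apply]
  exact ⟨⟨f, g, hgf, hfg⟩, hfj⟩

private lemma glue_image {u v : κ → Set X} {e : ∀ j, u j ≃ v j} {T : Equiv.Perm X}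
    (hT : ∀ j (x : X) (hx : x ∈ u j), T x = (e j ⟨x, hx⟩ : X)) (j : κ) :
    ⇑T '' u j = v j := by
  apply subset_antisymm
  · rintro y ⟨x, hx, rfl⟩
    rw [hT j x hx]; exact (e j ⟨x, hx⟩).2
  · intro y hy
    refine ⟨((e j).symm ⟨y, hy⟩ : X), ((e j).symm ⟨y, hy⟩).2, ?_⟩
    rw [hT j _ ((e j).symm ⟨y, hy⟩).2]
    exact congrArg Subtype.val ((e j).apply_symm_apply ⟨y, hy⟩)

private lemma glue_symm {u v : κ → Set X} {e : ∀ j, u j ≃ v j} {T : Equiv.Perm X}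
    (hT : ∀ j (x : X) (hx : x ∈ u j), T x = (e j ⟨x, hx⟩ : X)) :
    ∀ j (y : X) (hy : y ∈ v j), T.symm y = ((e j).symm ⟨y, hy⟩ : X) := by
  intro j y hy
  apply T.injective
  rw [Equiv.apply_symm_apply, hT j _ ((e j).symm ⟨y, hy⟩).2]
  exact (congrArg Subtype.val ((e j).apply_symm_apply ⟨y, hy⟩)).symm

private lemma glue_measurable [MeasurableSpace X] [Countable κ] {u v : κ → Set X}
    (hum : ∀ j, MeasurableSet (u j)) (hu : ∀ x, ∃! j, x ∈ u j)
    {e : ∀ j, u j ≃ v j} (he : ∀ j, Measurable fun a : u j => (e j a : X))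
    {T : Equiv.Perm X} (hT : ∀ j (x : X) (hx : x ∈ u j), T x = (e j ⟨x, hx⟩ : X)) :
    Measurable T := by
  intro t ht
  have key : ⇑T ⁻¹' t = ⋃ j, Subtype.val '' ((fun a : u j => (e j a : X)) ⁻¹' t) := by
    ext x
    simp only [mem_preimage, mem_iUnion, mem_image]
    constructor
    · intro hx
      obtain ⟨j, hj, -⟩ := hu x
      exact ⟨j, ⟨x, hj⟩, by rwa [← hT j x hj], rfl⟩
    · rintro ⟨j, ⟨x', hx'⟩, hmem, rfl⟩
      rwa [hT j x' hx']
  rw [key]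
  exact MeasurableSet.iUnion fun j => (hum j).subtype_image (he j ht)

private lemma measurable_of_countable_support {X : Type*} [MeasurableSpace X]
    [MeasurableSingletonClass X] (T : X ≃ X) (h : {x | T x ≠ x}.Countable) :
    Measurable T := by
  intro t ht
  have key : ⇑T ⁻¹' t = (t \ {x | T x ≠ x}) ∪ ({x | T x ≠ x} ∩ ⇑T ⁻¹' t) := by
    ext x
    by_cases hx : T x = x
    · simp [mem_preimage, hx]
    · simp [mem_preimage, hx]
  rw [key]
  exact (ht.diff h.measurableSet).union ((h.mono inter_subset_left).measurableSet)

private def idEquiv {X : Type*} {s t : Set X} (h : s = t) : (s : Set X) ≃ (t : Set X) :=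
  ⟨fun a => ⟨a.1, h ▸ a.2⟩, fun b => ⟨b.1, h.symm ▸ b.2⟩,
    fun a => Subtype.ext rfl, fun b => Subtype.ext rfl⟩

end Helpers

section Main

variable {X : Type*} [MeasurableSpace X] [StandardBorelSpace X] [Uncountable X]

theorem aperiodic_smooth_dense_quotient_weak' (P : Equiv.Perm X) (hP : IsBorelAuto P)
    (n : ℕ) (F : Fin n → Set X) (hF : ∀ i, MeasurableSet (F i)) :
    ∃ S Q : Equiv.Perm X, IsBorelAuto S ∧ IsAperiodic S ∧ IsSmooth S ∧
      IsBorelAuto Q ∧ {x : X | Q x ≠ x}.Countable ∧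
      ∀ i, (⇑(S * Q)) '' F i = (⇑P) '' F i := by
  classical
  obtain ⟨hPm, hPsm⟩ := hP
  -- ## Part 1 : atoms of the family F
  set A : (Fin n → Bool) → Set X := fun ε => ⋂ i, if ε i = true then F i else (F i)ᶜ
    with hA_def
  have mem_A : ∀ ε x, x ∈ A ε ↔ ∀ i, (x ∈ F i ↔ ε i = true) := by
    intro ε x
    simp only [hA_def, mem_iInter]
    refine forall_congr' fun i => ?_
    by_cases h : ε i = true <;> simp [h]
  have measA : ∀ ε, MeasurableSet (A ε) := by
    intro ε
    refine MeasurableSet.iInter fun i => ?_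
    by_cases h : ε i = true
    · simpa [h] using hF i
    · simpa [h] using (hF i).compl
  have part_A : ∀ x, ∃! ε, x ∈ A ε := by
    intro x
    refine ⟨fun i => decide (x ∈ F i), ?_, ?_⟩
    · simp only [mem_A]; intro i; simp
    · intro ε' hε'
      rw [mem_A] at hε'
      funext i
      have hi := hε' i
      by_cases hxi : x ∈ F i
      · simp only [hxi, true_iff] at hi; simp [hi, hxi]
      · simp only [hxi, false_iff] at hi; simp only [Bool.not_eq_true] at hi
        simp [hi, hxi]
  have F_eq : ∀ i, F i = ⋃ ε, ⋃ (_ : ε i = true), A ε := by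
    intro i; ext x
    simp only [mem_iUnion]
    constructor
    · intro hx
      obtain ⟨ε, hε, -⟩ := part_A x
      exact ⟨ε, ((mem_A ε x).1 hε i).1 hx, hε⟩
    · rintro ⟨ε, hεi, hx⟩
      exact ((mem_A ε x).1 hx i).2 hεi
  set B : (Fin n → Bool) → Set X := fun ε => ⇑P '' A ε with hB_def
  have mem_B : ∀ ε x, x ∈ B ε ↔ P.symm x ∈ A ε := by
    intro ε x
    simp only [hB_def]
    constructor
    · rintro ⟨y, hy, rfl⟩; simpa using hy
    · intro h; exact ⟨P.symm x, h, by simp⟩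
  have measB : ∀ ε, MeasurableSet (B ε) := by
    intro ε
    have : B ε = ⇑P.symm ⁻¹' A ε := by ext x; rw [mem_B]; rfl
    rw [this]; exact hPsm (measA ε)
  have part_B : ∀ x, ∃! ε, x ∈ B ε := by
    intro x
    obtain ⟨ε, hε, hu⟩ := part_A (P.symm x)
    exact ⟨ε, (mem_B ε x).2 hε, fun ε' h' => hu ε' ((mem_B ε' x).1 h')⟩
  have countAB : ∀ ε, (B ε).Countable ↔ (A ε).Countable := by
    intro ε
    simp only [hB_def]
    exact countable_image_equiv_iff P (A ε)
  -- ## Part 2 : absorbing the countable atoms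
  have hXunc : ¬ (univ : Set X).Countable := not_countable_univ
  have hex : ∃ ε, ¬ (A ε).Countable := by
    by_contra hc
    push_neg at hc
    apply hXunc
    have hcov : (univ : Set X) ⊆ ⋃ ε, A ε := fun x _ =>
      mem_iUnion.2 ⟨(part_A x).choose, (part_A x).choose_spec.1⟩
    exact (countable_iUnion hc).mono hcov
  let J := {ε : Fin n → Bool // ¬ (A ε).Countable}
  let εs : J := ⟨hex.choose, hex.choose_spec⟩
  set KA : Set X := ⋃ ε ∈ {ε : Fin n → Bool | (A ε).Countable}, A ε with hKA_def
  set KB : Set X := ⋃ ε ∈ {ε : Fin n → Bool | (B ε).Countable}, B ε with hKB_def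
  have hKAc : KA.Countable := Countable.biUnion (to_countable _) fun ε hε => hε
  have hKBc : KB.Countable := Countable.biUnion (to_countable _) fun ε hε => hε
  have hKAm : MeasurableSet KA := MeasurableSet.biUnion (to_countable _) fun ε _ => measA ε
  have hKBm : MeasurableSet KB := MeasurableSet.biUnion (to_countable _) fun ε _ => measB ε
  have mem_KA : ∀ x, x ∈ KA ↔ ∃ ε, (A ε).Countable ∧ x ∈ A ε := by
    intro x; simp only [hKA_def, mem_iUnion, mem_setOf_eq, exists_prop]
  have mem_KB : ∀ x, x ∈ KB ↔ ∃ ε, (B ε).Countable ∧ x ∈ B ε := by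
    intro x; simp only [hKB_def, mem_iUnion, mem_setOf_eq, exists_prop]
  set Ab : J → Set X := fun ε => if ε = εs then A ε.1 ∪ KA else A ε.1 with hAb_def
  set Bb : J → Set X := fun ε => if ε = εs then B ε.1 ∪ KB else B ε.1 with hBb_def
  have hAb_eps : Ab εs = A εs.1 ∪ KA := by simp only [hAb_def, if_pos rfl]
  have hBb_eps : Bb εs = B εs.1 ∪ KB := by simp only [hBb_def, if_pos rfl]
  have hAb_ne : ∀ ε : J, ε ≠ εs → Ab ε = A ε.1 := by
    intro ε h; simp only [hAb_def, if_neg h]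
  have hBb_ne : ∀ ε : J, ε ≠ εs → Bb ε = B ε.1 := by
    intro ε h; simp only [hBb_def, if_neg h]
  have hsubAb : ∀ ε : J, A ε.1 ⊆ Ab ε := by
    intro ε; by_cases h : ε = εs
    · subst h; rw [hAb_eps]; exact subset_union_left
    · rw [hAb_ne ε h]
  have hsubBb : ∀ ε : J, B ε.1 ⊆ Bb ε := by
    intro ε
    by_cases h : ε = εs
    · subst h; rw [hBb_eps]; exact subset_union_left
    · rw [hBb_ne ε h]
  have memAb : ∀ (ε : J) x, x ∈ Ab ε → x ∈ A ε.1 ∨ (ε = εs ∧ x ∈ KA) := by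
    intro ε x h
    by_cases hε : ε = εs
    · subst hε; rw [hAb_eps] at h
      rcases h with h | h
      exacts [Or.inl h, Or.inr ⟨rfl, h⟩]
    · rw [hAb_ne ε hε] at h; exact Or.inl h
  have memBb : ∀ (ε : J) x, x ∈ Bb ε → x ∈ B ε.1 ∨ (ε = εs ∧ x ∈ KB) := by
    intro ε x h
    by_cases hε : ε = εs
    · subst hε; rw [hBb_eps] at h
      rcases h with h | h
      exacts [Or.inl h, Or.inr ⟨rfl, h⟩]
    · rw [hBb_ne ε hε] at h; exact Or.inl h
  have measAb : ∀ ε : J, MeasurableSet (Ab ε) := by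
    intro ε
    by_cases h : ε = εs
    · subst h; rw [hAb_eps]; exact (measA _).union hKAm
    · rw [hAb_ne ε h]; exact measA _
  have measBb : ∀ ε : J, MeasurableSet (Bb ε) := by
    intro ε
    by_cases h : ε = εs
    · subst h; rw [hBb_eps]; exact (measB _).union hKBm
    · rw [hBb_ne ε h]; exact measB _
  have uncAb : ∀ ε : J, ¬ (Ab ε).Countable :=
    fun ε h => ε.2 (h.mono (hsubAb ε))
  have uncBb : ∀ ε : J, ¬ (Bb ε).Countable := by
    intro ε h
    exact ((countAB ε.1).not.2 ε.2) (h.mono (hsubBb ε))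
  have part_Ab : ∀ x, ∃! ε : J, x ∈ Ab ε := by
    intro x
    obtain ⟨δ, hδ, hδu⟩ := part_A x
    by_cases hc : (A δ).Countable
    · refine ⟨εs, ?_, ?_⟩
      · show x ∈ Ab εs
        rw [hAb_eps]; exact Or.inr ((mem_KA x).2 ⟨δ, hc, hδ⟩)
      · intro ε' h'
        rcases memAb ε' x h' with h1 | h2
        · exact absurd (hδu ε'.1 h1 ▸ ε'.2) (not_not.2 hc)
        · exact h2.1
    · refine ⟨⟨δ, hc⟩, hsubAb _ hδ, ?_⟩
      intro ε' h'
      rcases memAb ε' x h' with h1 | h2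
      · exact Subtype.ext (hδu ε'.1 h1)
      · obtain ⟨δ', hδ'c, hδ'⟩ := (mem_KA x).1 h2.2
        exact absurd (hδu δ' hδ' ▸ hδ'c) hc
  have part_Bb : ∀ x, ∃! ε : J, x ∈ Bb ε := by
    intro x
    obtain ⟨δ, hδ, hδu⟩ := part_B x
    by_cases hc : (A δ).Countable
    · refine ⟨εs, ?_, ?_⟩
      · show x ∈ Bb εs
        rw [hBb_eps]; exact Or.inr ((mem_KB x).2 ⟨δ, (countAB δ).2 hc, hδ⟩)
      · intro ε' h'
        rcases memBb ε' x h' with h1 | h2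
        · exact absurd (hδu ε'.1 h1 ▸ ε'.2) (not_not.2 hc)
        · exact h2.1
    · refine ⟨⟨δ, hc⟩, hsubBb _ hδ, ?_⟩
      intro ε' h'
      rcases memBb ε' x h' with h1 | h2
      · exact Subtype.ext (hδu ε'.1 h1)
      · obtain ⟨δ', hδ'c, hδ'⟩ := (mem_KB x).1 h2.2
        exact absurd ((countAB δ).1 (hδu δ' hδ' ▸ hδ'c)) hc
  -- ## Part 3 : refined pieces
  have hδs : ∀ ε : J, ∃ δ : J, ¬ (Ab ε ∩ Bb δ).Countable := by
    intro ε
    by_contra hcon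
    push_neg at hcon
    apply uncAb ε
    have hcov : Ab ε ⊆ ⋃ δ : J, (Ab ε ∩ Bb δ) := by
      intro x hx
      obtain ⟨δ, hδ, -⟩ := part_Bb x
      exact mem_iUnion.2 ⟨δ, hx, hδ⟩
    exact (countable_iUnion hcon).mono hcov
  choose δs hδsc using hδs
  set L : J → Set X := fun ε => ⋃ δ ∈ {δ : J | (Ab ε ∩ Bb δ).Countable}, (Ab ε ∩ Bb δ)
    with hL_def
  have hLc : ∀ ε, (L ε).Countable := fun ε =>
    Countable.biUnion (to_countable _) fun δ hδ => hδ
  have hLm : ∀ ε, MeasurableSet (L ε) := fun ε =>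
    MeasurableSet.biUnion (to_countable _) fun δ _ => (measAb ε).inter (measBb δ)
  have memL : ∀ (ε : J) x, x ∈ L ε ↔ ∃ δ : J, (Ab ε ∩ Bb δ).Countable ∧ x ∈ Ab ε ∩ Bb δ := by
    intro ε x; simp only [hL_def, mem_iUnion, mem_setOf_eq, exists_prop]
  have hLsub : ∀ ε, L ε ⊆ Ab ε := by
    intro ε x hx
    obtain ⟨δ, -, hδ⟩ := (memL ε x).1 hx
    exact hδ.1
  let D := {p : J × J // ¬ (Ab p.1 ∩ Bb p.2).Countable}
  set Pc : D → Set X := fun p =>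
      if p.1.2 = δs p.1.1 then (Ab p.1.1 ∩ Bb p.1.2) ∪ L p.1.1 else Ab p.1.1 ∩ Bb p.1.2
    with hPc_def
  have supPc : ∀ p : D, Ab p.1.1 ∩ Bb p.1.2 ⊆ Pc p := by
    intro p
    simp only [hPc_def]
    split
    · exact subset_union_left
    · exact subset_rfl
  have memPc : ∀ (p : D) y, y ∈ Pc p →
      (y ∈ Ab p.1.1 ∩ Bb p.1.2) ∨ (p.1.2 = δs p.1.1 ∧ y ∈ L p.1.1) := by
    intro p y hy
    simp only [hPc_def] at hy
    by_cases hb : p.1.2 = δs p.1.1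
    · rw [if_pos hb] at hy
      rcases hy with hy | hy
      exacts [Or.inl hy, Or.inr ⟨hb, hy⟩]
    · rw [if_neg hb] at hy; exact Or.inl hy
  have hPc_subA : ∀ p : D, Pc p ⊆ Ab p.1.1 := by
    intro p y hy
    rcases memPc p y hy with h | h
    exacts [h.1, hLsub _ h.2]
  have hPc_diff : ∀ p : D, Pc p \ L p.1.1 ⊆ Ab p.1.1 ∩ Bb p.1.2 := by
    intro p y hy
    rcases memPc p y hy.1 with h | h
    exacts [h, absurd h.2 hy.2]
  have hPcm : ∀ p : D, MeasurableSet (Pc p) := by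
    intro p
    simp only [hPc_def]
    split
    · exact ((measAb _).inter (measBb _)).union (hLm _)
    · exact (measAb _).inter (measBb _)
  have hPcunc : ∀ p : D, ¬ (Pc p).Countable :=
    fun p hc => p.2 (hc.mono (supPc p))
  have part_Pc : ∀ x, ∃! p : D, x ∈ Pc p := by
    intro x
    obtain ⟨ε, hε, huε⟩ := part_Ab x
    obtain ⟨δ, hδ, huδ⟩ := part_Bb x
    by_cases hc : (Ab ε ∩ Bb δ).Countable
    · refine ⟨⟨(ε, δs ε), hδsc ε⟩, ?_, ?_⟩
      · show x ∈ Pc ⟨(ε, δs ε), hδsc ε⟩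
        simp only [hPc_def, if_pos rfl]
        exact Or.inr ((memL ε x).2 ⟨δ, hc, hε, hδ⟩)
      · rintro ⟨⟨ε', δ'⟩, hp⟩ hx'
        rcases memPc _ x hx' with h1 | h2
        · have he : ε' = ε := huε ε' h1.1
          have hd : δ' = δ := huδ δ' h1.2
          rw [he, hd] at hp
          exact absurd hc hp
        · obtain ⟨δ'', hc'', hx''⟩ := (memL ε' x).1 h2.2
          have he : ε' = ε := huε ε' hx''.1
          have h3 : δ' = δs ε' := h2.1
          exact Subtype.ext (Prod.ext he (show δ' = δs ε by rw [h3, he]))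
    · refine ⟨⟨(ε, δ), hc⟩, supPc _ ⟨hε, hδ⟩, ?_⟩
      rintro ⟨⟨ε', δ'⟩, hp⟩ hx'
      rcases memPc _ x hx' with h1 | h2
      · exact Subtype.ext (Prod.ext (huε ε' h1.1) (huδ δ' h1.2))
      · obtain ⟨δ'', hc'', hx''⟩ := (memL ε' x).1 h2.2
        have he : ε' = ε := huε ε' hx''.1
        have hd : δ'' = δ := huδ δ'' hx''.2
        rw [he, hd] at hc''
        exact absurd hc'' hc
  -- ## Part 4 : the height function
  have hRZunc : ¬ Countable (ℝ × ℤ) := not_countable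
  have hγ : ∀ p : D, ∃ g : (Pc p : Set X) ≃ (ℝ × ℤ), Measurable ⇑g := by
    intro p
    haveI := (hPcm p).standardBorel
    have c1 : ¬ Countable (Pc p : Set X) := by
      rw [countable_coe_iff]; exact hPcunc p
    let m := PolishSpace.measurableEquivOfNotCountable c1 hRZunc
    exact ⟨m.toEquiv, m.measurable⟩
  choose γ γm using hγ
  set hei : X → ℤ := fun x => (γ (part_Pc x).choose ⟨x, (part_Pc x).choose_spec.1⟩).2
    with hei_def
  have hei_eq : ∀ (p : D) (x : X) (hx : x ∈ Pc p), hei x = (γ p ⟨x, hx⟩).2 := by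
    intro p x hx
    have hj : (part_Pc x).choose = p := ((part_Pc x).choose_spec.2 p hx).symm
    subst hj
    rw [hei_def]
  have hfib : ∀ k : ℤ, MeasurableSet (hei ⁻¹' {k}) := by
    intro k
    have key : hei ⁻¹' {k} = ⋃ p : D, Subtype.val '' ((fun a : (Pc p : Set X) => (γ p a).2) ⁻¹' {k}) := by
      ext x
      simp only [mem_preimage, mem_singleton_iff, mem_iUnion, mem_image]
      constructor
      · intro hx
        refine ⟨(part_Pc x).choose, ⟨x, (part_Pc x).choose_spec.1⟩, ?_, rfl⟩
        rw [← hei_eq _ x (part_Pc x).choose_spec.1]; exact hx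
      · rintro ⟨p, ⟨x', hx'⟩, hk, rfl⟩
        rw [hei_eq p x' hx']; exact hk
    rw [key]
    exact MeasurableSet.iUnion fun p =>
      (hPcm p).subtype_image ((measurable_snd.comp (γm p)) (measurableSet_singleton k))
  have hslice : ∀ (p : D) (k : ℤ), ¬ (Pc p ∩ hei ⁻¹' {k}).Countable := by
    intro p k hcc
    have finj : Function.Injective (fun r : ℝ => (((γ p).symm (r, k)) : X)) := by
      intro a b hab
      have h1 := (γ p).symm.injective (Subtype.coe_injective hab)
      exact congrArg Prod.fst h1
    have hrange : ∀ r : ℝ, (((γ p).symm (r, k)) : X) ∈ Pc p ∩ hei ⁻¹' {k} := by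
      intro r
      refine ⟨((γ p).symm (r, k)).2, ?_⟩
      rw [mem_preimage, mem_singleton_iff, hei_eq p _ ((γ p).symm (r, k)).2,
        Subtype.coe_eta, Equiv.apply_symm_apply]
    have hcu : (univ : Set ℝ).Countable :=
      (hcc.preimage finj).mono fun r _ => hrange r
    exact not_countable_univ hcu
  -- ## Part 5 : the aperiodic smooth automorphism S
  set u : J × ℤ → Set X := fun q => Ab q.1 ∩ hei ⁻¹' {q.2} with hu_def
  set v : J × ℤ → Set X := fun q => Bb q.1 ∩ hei ⁻¹' {q.2 + 1} with hv_def
  have measu : ∀ q, MeasurableSet (u q) := fun q => (measAb q.1).inter (hfib q.2)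
  have measv : ∀ q, MeasurableSet (v q) := fun q => (measBb q.1).inter (hfib (q.2 + 1))
  have part_u : ∀ x, ∃! q : J × ℤ, x ∈ u q := by
    intro x
    obtain ⟨ε, hε, hu'⟩ := part_Ab x
    refine ⟨(ε, hei x), ⟨hε, rfl⟩, ?_⟩
    rintro ⟨ε', k'⟩ ⟨h1, h2⟩
    have hk : hei x = k' := h2
    exact Prod.ext (hu' ε' h1) hk.symm
  have part_v : ∀ x, ∃! q : J × ℤ, x ∈ v q := by
    intro x
    obtain ⟨ε, hε, hu'⟩ := part_Bb x
    refine ⟨(ε, hei x - 1), ⟨hε, by simp⟩, ?_⟩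
    rintro ⟨ε', k'⟩ ⟨h1, h2⟩
    have hk : hei x = k' + 1 := h2
    exact Prod.ext (hu' ε' h1) (by omega)
  have uncu : ∀ q, ¬ (u q).Countable := by
    rintro ⟨ε, k⟩ hc
    refine hslice ⟨(ε, δs ε), hδsc ε⟩ k (hc.mono ?_)
    exact inter_subset_inter (hPc_subA _) subset_rfl
  have uncv : ∀ q, ¬ (v q).Countable := by
    rintro ⟨δ, k⟩ hc
    have hexε : ∃ ε : J, ¬ (Ab ε ∩ Bb δ).Countable := by
      by_contra hcon
      push_neg at hcon
      apply uncBb δ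
      have hcov : Bb δ ⊆ ⋃ ε : J, (Ab ε ∩ Bb δ) := by
        intro x hx
        obtain ⟨ε, hε, -⟩ := part_Ab x
        exact mem_iUnion.2 ⟨ε, hε, hx⟩
      exact (countable_iUnion hcon).mono hcov
    obtain ⟨ε, hεδ⟩ := hexε
    set p : D := ⟨(ε, δ), hεδ⟩ with hp_def
    refine not_countable_diff (hslice p (k + 1)) (hLc ε) ?_
    refine Set.Countable.mono ?_ hc
    intro y hy
    have h1 : y ∈ Ab ε ∩ Bb δ := hPc_diff p ⟨hy.1.1, hy.2⟩
    exact ⟨h1.2, hy.1.2⟩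
  have heSS : ∀ q : J × ℤ, ∃ e : (u q : Set X) ≃ (v q : Set X),
      Measurable (fun a : (u q : Set X) => (e a : X)) ∧
      Measurable (fun b : (v q : Set X) => (e.symm b : X)) := by
    intro q
    haveI := (measu q).standardBorel
    haveI := (measv q).standardBorel
    have c1 : ¬ Countable (u q : Set X) := by rw [countable_coe_iff]; exact uncu q
    have c2 : ¬ Countable (v q : Set X) := by rw [countable_coe_iff]; exact uncv q
    let m := PolishSpace.measurableEquivOfNotCountable c1 c2
    exact ⟨m.toEquiv, measurable_subtype_coe.comp m.measurable,
      measurable_subtype_coe.comp m.symm.measurable⟩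
  choose eS eSm eSm' using heSS
  obtain ⟨S, hS⟩ := glue_exists u v part_u part_v eS
  have hSm : Measurable ⇑S := glue_measurable measu part_u eSm hS
  have hSsymm_pt := glue_symm hS
  have hSm' : Measurable ⇑S.symm :=
    glue_measurable (e := fun q => (eS q).symm) measv part_v eSm' hSsymm_pt
  have hSimg : ∀ q, ⇑S '' u q = v q := glue_image hS
  -- grading
  have hgrade : ∀ x, hei (S x) = hei x + 1 := by
    intro x
    obtain ⟨q, hq, -⟩ := part_u x
    have hSx : S x ∈ v q := by rw [← hSimg q]; exact mem_image_of_mem _ hq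
    have h1 : hei (S x) = q.2 + 1 := hSx.2
    have h2 : hei x = q.2 := hq.2
    omega
  have hgradeInv : ∀ x, hei (S.symm x) = hei x - 1 := by
    intro x
    have := hgrade (S.symm x)
    rw [Equiv.apply_symm_apply] at this
    omega
  have hpow : ∀ (m : ℤ) (x : X), hei ((S ^ m) x) = hei x + m := by
    intro m
    induction m using Int.induction_on with
    | zero => intro x; simp
    | succ k ih =>
        intro x
        rw [zpow_add_one, Equiv.Perm.mul_apply, ih (S x), hgrade x]
        omega
    | pred k ih =>
        intro x
        rw [zpow_sub_one, Equiv.Perm.mul_apply, show (S⁻¹ : Equiv.Perm X) = S.symm from rfl,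
          ih (S.symm x), hgradeInv x]
        omega
  have hap : IsAperiodic S := by
    intro x m hm heq
    have h1 := hpow m x
    rw [heq] at h1
    omega
  have hsm : IsSmooth S := by
    refine ⟨hei ⁻¹' {0}, hfib 0, fun x => ?_⟩
    refine ⟨(S ^ (-hei x)) x, ⟨?_, ⟨-hei x, rfl⟩⟩, ?_⟩
    · rw [mem_preimage, mem_singleton_iff, hpow]; omega
    · rintro a ⟨ha, m, rfl⟩
      have h1 : hei x + m = 0 := by
        rw [← hpow m x]
        simpa using ha
      have h2 : m = -hei x := by omega
      rw [h2]
  -- image of the absorbed atoms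
  have hSAb : ∀ ε : J, ⇑S '' Ab ε = Bb ε := by
    intro ε
    apply subset_antisymm
    · rintro y ⟨x, hx, rfl⟩
      have hxu : x ∈ u (ε, hei x) := ⟨hx, rfl⟩
      have := (hSimg (ε, hei x)) ▸ mem_image_of_mem ⇑S hxu
      exact this.1
    · intro y hy
      have hyv : y ∈ v (ε, hei y - 1) := ⟨hy, show hei y = hei y - 1 + 1 by omega⟩
      rw [← hSimg (ε, hei y - 1)] at hyv
      obtain ⟨x, hx, rfl⟩ := hyv
      exact mem_image_of_mem _ hx.1
  -- ## Part 6 : the corrected atoms A'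
  set A' : (Fin n → Bool) → Set X := fun ε => ⇑S ⁻¹' B ε with hA'_def
  have mem_A' : ∀ ε x, x ∈ A' ε ↔ S x ∈ B ε := by
    intro ε x; simp only [hA'_def, mem_preimage]
  have part_A' : ∀ x, ∃! ε, x ∈ A' ε := by
    intro x
    obtain ⟨ε, hε, hu'⟩ := part_B (S x)
    exact ⟨ε, (mem_A' ε x).2 hε, fun ε' h' => hu' ε' ((mem_A' ε' x).1 h')⟩
  have hA'eq : ∀ ε : J, ε ≠ εs → A' ε.1 = A ε.1 := by
    intro ε hne
    have h1 : ⇑S '' A ε.1 = B ε.1 := by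
      have h2 := hSAb ε
      rw [hAb_ne ε hne, hBb_ne ε hne] at h2
      exact h2
    simp only [hA'_def]
    rw [← h1, preimage_image_eq _ S.injective]
  have hA'c : ∀ ε, (A ε).Countable → (A' ε).Countable := by
    intro ε hc
    simp only [hA'_def]
    exact ((countAB ε).2 hc).preimage S.injective
  have hveps : εs.1 = εs.1 := rfl
  have hdiff1 : ∀ ε, (A ε \ A' ε).Countable := by
    intro ε
    by_cases hc : (A ε).Countable
    · exact hc.mono diff_subset
    · by_cases hεs : (⟨ε, hc⟩ : J) = εs
      · have hv : ε = εs.1 := congrArg Subtype.val hεs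
        have hsub : A ε \ A' ε ⊆ ⇑S ⁻¹' KB := by
          intro x hx
          have hxAb : x ∈ Ab εs := by
            rw [hAb_eps]; exact Or.inl (hv ▸ hx.1)
          have hSx : S x ∈ Bb εs := by
            rw [← hSAb εs]; exact mem_image_of_mem _ hxAb
          rw [hBb_eps] at hSx
          rcases hSx with h1 | h1
          · exact absurd ((mem_A' ε x).2 (hv ▸ h1)) hx.2
          · exact h1
        exact (hKBc.preimage S.injective).mono hsub
      · have h0 := hA'eq ⟨ε, hc⟩ hεs
        rw [show A' ε = A ε from h0]
        simp
  have hdiff2 : ∀ ε, (A' ε \ A ε).Countable := by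
    intro ε
    by_cases hc : (A ε).Countable
    · exact (hA'c ε hc).mono diff_subset
    · by_cases hεs : (⟨ε, hc⟩ : J) = εs
      · have hv : ε = εs.1 := congrArg Subtype.val hεs
        have hsub : A' ε \ A ε ⊆ KA := by
          intro x hx
          have hSx : S x ∈ Bb εs := hsubBb εs (hv ▸ (mem_A' ε x).1 hx.1)
          have hxAb : x ∈ Ab εs := by
            rw [← hSAb εs] at hSx
            obtain ⟨y, hy, he⟩ := hSx
            rw [← S.injective he]
            exact hy
          rw [hAb_eps] at hxAb
          rcases hxAb with h1 | h1
          · exact absurd (hv ▸ h1) hx.2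
          · exact h1
        exact hKAc.mono hsub
      · have h0 := hA'eq ⟨ε, hc⟩ hεs
        rw [show A' ε = A ε from h0]
        simp
  have eqAA' : ∀ ε, Nonempty ((A ε : Set X) ≃ (A' ε : Set X)) := by
    intro ε
    have h1 : A' ε = ⇑S.symm '' B ε := by
      ext x
      rw [mem_A']
      constructor
      · intro hx; exact ⟨S x, hx, by simp⟩
      · rintro ⟨y, hy, rfl⟩; simpa using hy
    have hBe : ⇑P '' A ε = B ε := by simp only [hB_def]
    exact ⟨(Equiv.Set.image ⇑P (A ε) P.injective).trans ((Equiv.setCongr hBe).trans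
      ((Equiv.Set.image ⇑S.symm (B ε) S.symm.injective).trans (Equiv.setCongr h1.symm)))⟩
  -- ## Part 7 : the countable correction set W'
  set W : Set X := ⋃ ε, ((A ε \ A' ε) ∪ (A' ε \ A ε)) with hW_def
  have hWc : W.Countable := countable_iUnion fun ε => (hdiff1 ε).union (hdiff2 ε)
  have hinfAA' : ∀ ε, ¬ (A ε).Countable → (A ε ∩ A' ε).Infinite := by
    intro ε hc
    have hncc : ¬ (A ε ∩ A' ε).Countable := by
      intro hcc
      apply hc
      have hsub : A ε ⊆ (A ε ∩ A' ε) ∪ (A ε \ A' ε) := by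
        intro x hx
        by_cases hx' : x ∈ A' ε
        exacts [Or.inl ⟨hx, hx'⟩, Or.inr ⟨hx, hx'⟩]
      exact ((hcc.union (hdiff1 ε)).mono hsub)
    exact fun hf => hncc hf.countable
  set N : (Fin n → Bool) → Set X := fun ε =>
      if hc : (A ε).Countable then ∅
      else Set.range (fun k : ℕ => ((Set.Infinite.natEmbedding _ (hinfAA' ε hc)) k : X))
    with hN_def
  have hNc : ∀ ε, (N ε).Countable := by
    intro ε
    simp only [hN_def]
    split
    · exact countable_empty
    · exact countable_range _
  have hNsub : ∀ ε, ¬ (A ε).Countable → N ε ⊆ A ε ∩ A' ε := by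
    intro ε hc
    simp only [hN_def, dif_neg hc]
    rintro x ⟨k, rfl⟩
    exact ((Set.Infinite.natEmbedding _ (hinfAA' ε hc)) k).2
  have hNinf : ∀ ε, ¬ (A ε).Countable → (N ε).Infinite := by
    intro ε hc
    simp only [hN_def, dif_neg hc]
    exact Set.infinite_range_of_injective fun a b hab =>
      (Set.Infinite.natEmbedding _ (hinfAA' ε hc)).injective (Subtype.coe_injective hab)
  set Ext : (Fin n → Bool) → Set X := fun ε =>
      if (A ε).Countable then A ε ∪ A' ε else N ε with hExt_def
  have hExtc : ∀ ε, (Ext ε).Countable := by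
    intro ε
    simp only [hExt_def]
    split
    · next hc => exact hc.union (hA'c ε hc)
    · exact hNc ε
  set W' : Set X := W ∪ ⋃ ε, Ext ε with hW'_def
  have hW'c : W'.Countable := hWc.union (countable_iUnion hExtc)
  have hWsubW' : W ⊆ W' := subset_union_left
  have hExtsubW' : ∀ ε, Ext ε ⊆ W' := fun ε =>
    (subset_iUnion Ext ε).trans subset_union_right
  have hdiffW : ∀ ε, A ε \ W' = A' ε \ W' := by
    intro ε
    ext x
    constructor
    · rintro ⟨hx, hxW⟩
      refine ⟨?_, hxW⟩
      by_contra hx'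
      exact hxW (hWsubW' (mem_iUnion.2 ⟨ε, Or.inl ⟨hx, hx'⟩⟩))
    · rintro ⟨hx, hxW⟩
      refine ⟨?_, hxW⟩
      by_contra hx'
      exact hxW (hWsubW' (mem_iUnion.2 ⟨ε, Or.inr ⟨hx, hx'⟩⟩))
  have eW : ∀ ε, Nonempty ((A ε ∩ W' : Set X) ≃ (A' ε ∩ W' : Set X)) := by
    intro ε
    by_cases hc : (A ε).Countable
    · have hAsub : A ε ⊆ W' := by
        refine subset_trans ?_ (hExtsubW' ε)
        simp only [hExt_def, if_pos hc]
        exact subset_union_left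
      have hA'sub : A' ε ⊆ W' := by
        refine subset_trans ?_ (hExtsubW' ε)
        simp only [hExt_def, if_pos hc]
        exact subset_union_right
      have h1 : A ε ∩ W' = A ε := inter_eq_self_of_subset_left hAsub
      have h2 : A' ε ∩ W' = A' ε := inter_eq_self_of_subset_left hA'sub
      obtain ⟨e⟩ := eqAA' ε
      exact ⟨(Equiv.setCongr h1).trans (e.trans (Equiv.setCongr h2.symm))⟩
    · have key : ∀ s : Set X, s.Countable → s.Infinite → Nonempty ((s : Set X) ≃ ℕ) := by
        intro s h1 h2
        haveI := h1.to_subtype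
        haveI := h2.to_subtype
        obtain ⟨d⟩ := nonempty_denumerable (s : Set X)
        exact ⟨@Denumerable.eqv _ d⟩
      have hNW' : N ε ⊆ W' := by
        refine subset_trans ?_ (hExtsubW' ε)
        simp only [hExt_def, if_neg hc]
        exact subset_rfl
      have c1 : (A ε ∩ W').Countable := hW'c.mono inter_subset_right
      have c2 : (A' ε ∩ W').Countable := hW'c.mono inter_subset_right
      have i1 : (A ε ∩ W').Infinite := (hNinf ε hc).mono
        (fun x hx => ⟨(hNsub ε hc hx).1, hNW' hx⟩)
      have i2 : (A' ε ∩ W').Infinite := (hNinf ε hc).mono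
        (fun x hx => ⟨(hNsub ε hc hx).2, hNW' hx⟩)
      obtain ⟨q1⟩ := key _ c1 i1
      obtain ⟨q2⟩ := key _ c2 i2
      exact ⟨q1.trans q2.symm⟩
  -- ## Part 8 : the countable-support automorphism Q
  set uQ : Option (Fin n → Bool) → Set X :=
      fun o => Option.elim o (W'ᶜ) (fun ε => A ε ∩ W') with huQ_def
  set vQ : Option (Fin n → Bool) → Set X :=
      fun o => Option.elim o (W'ᶜ) (fun ε => A' ε ∩ W') with hvQ_def
  have part_uQ : ∀ x, ∃! o, x ∈ uQ o := by
    intro x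
    by_cases hx : x ∈ W'
    · obtain ⟨ε, hε, hu'⟩ := part_A x
      refine ⟨some ε, ⟨hε, hx⟩, ?_⟩
      rintro (_ | ε') h'
      · exact absurd hx h'
      · exact congrArg some (hu' ε' h'.1)
    · refine ⟨none, hx, ?_⟩
      rintro (_ | ε') h'
      · rfl
      · exact absurd h'.2 hx
  have part_vQ : ∀ x, ∃! o, x ∈ vQ o := by
    intro x
    by_cases hx : x ∈ W'
    · obtain ⟨ε, hε, hu'⟩ := part_A' x
      refine ⟨some ε, ⟨hε, hx⟩, ?_⟩
      rintro (_ | ε') h'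
      · exact absurd hx h'
      · exact congrArg some (hu' ε' h'.1)
    · refine ⟨none, hx, ?_⟩
      rintro (_ | ε') h'
      · rfl
      · exact absurd h'.2 hx
  have hQnone : uQ none = vQ none := by simp only [huQ_def, hvQ_def, Option.elim]
  have hQsome : ∀ ε, uQ (some ε) = A ε ∩ W' := by
    intro ε; simp only [huQ_def, Option.elim]
  have hvQsome : ∀ ε, vQ (some ε) = A' ε ∩ W' := by
    intro ε; simp only [hvQ_def, Option.elim]
  let eQ : ∀ o, (uQ o : Set X) ≃ (vQ o : Set X) := fun o =>
    Option.casesOn o (idEquiv hQnone)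
      (fun ε => (idEquiv (hQsome ε)).trans (((eW ε).some).trans (idEquiv (hvQsome ε).symm)))
  obtain ⟨Q, hQ⟩ := glue_exists uQ vQ part_uQ part_vQ eQ
  have hQid : ∀ x, x ∉ W' → Q x = x := by
    intro x hx
    exact (hQ none x hx).trans rfl
  have hQsupp : {x : X | Q x ≠ x}.Countable := by
    refine hW'c.mono fun x hx => ?_
    by_contra hxW
    exact hx (hQid x hxW)
  have hQsupp' : {x : X | Q.symm x ≠ x}.Countable := by
    refine hW'c.mono fun x hx => ?_
    by_contra hxW
    exact hx (by rw [← hQid x hxW, Equiv.symm_apply_apply, hQid x hxW])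
  have hQm : Measurable ⇑Q := measurable_of_countable_support Q hQsupp
  have hQm' : Measurable ⇑Q.symm := measurable_of_countable_support (Q.symm : X ≃ X) hQsupp'
  have himgQ : ∀ ε, ⇑Q '' A ε = A' ε := by
    intro ε
    have h1 : ⇑Q '' (A ε ∩ W') = A' ε ∩ W' := by
      have := glue_image hQ (some ε)
      rw [hQsome ε, hvQsome ε] at this
      exact this
    have h2 : ⇑Q '' (A ε \ W') = A ε \ W' := by
      ext y
      constructor
      · rintro ⟨x, hx, rfl⟩
        rw [hQid x hx.2]
        exact hx
      · intro hy
        exact ⟨y, hy, hQid y hy.2⟩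
    calc ⇑Q '' A ε = ⇑Q '' ((A ε ∩ W') ∪ (A ε \ W')) := by rw [inter_union_diff]
      _ = (A' ε ∩ W') ∪ (A ε \ W') := by rw [image_union, h1, h2]
      _ = (A' ε ∩ W') ∪ (A' ε \ W') := by rw [hdiffW ε]
      _ = A' ε := inter_union_diff _ _
  -- ## Part 9 : conclusion
  have hatom : ∀ ε, ⇑(S * Q) '' A ε = ⇑P '' A ε := by
    intro ε
    rw [Equiv.Perm.coe_mul, image_comp, himgQ ε]
    have : ⇑S '' A' ε = B ε := by
      simp only [hA'_def]
      exact image_preimage_eq _ S.surjective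
    rw [this]
  refine ⟨S, Q, ⟨hSm, hSm'⟩, hap, hsm, ⟨hQm, hQm'⟩, hQsupp, ?_⟩
  intro i
  rw [F_eq i]
  simp only [image_iUnion]
  exact iUnion_congr fun ε => iUnion_congr fun _ => hatom ε

end Main


/-- aperiodic smooth automorphisms are dense in `(Aut₀(X, 𝓑), p₀)`. -/
theorem aperiodic_smooth_dense_quotient_weak {X : Type*} [MeasurableSpace X]
    [StandardBorelSpace X] [Uncountable X]
    (P : Equiv.Perm X) (hP : IsBorelAuto P) (hPper : IsPeriodicAuto P)
    (n : ℕ) (F : Fin n → Set X) (hF : ∀ i, MeasurableSet (F i)) :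
    ∃ S Q : Equiv.Perm X, IsBorelAuto S ∧ IsAperiodic S ∧ IsSmooth S ∧
      IsBorelAuto Q ∧ {x : X | Q x ≠ x}.Countable ∧
      ∀ i, (⇑(S * Q)) '' F i = (⇑P) '' F i :=
  aperiodic_smooth_dense_quotient_weak' P hP n F hF
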